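/- (Lower-dimensional sharpness example) Let 5/2 ≤ σ ≤ 3, N ≥ 2, and set a_k = 1 for 1 ≤ k ≤ N^{σ/3} and a_k = 0 otherwise. Then ∫_{[0,1]²×[0,N^{-σ}]} |Σ_{k=1}^N a_k e(x·(k,k²,k³))|^p dx ≥ c^p N^{-2σ} N^{pσ/3} for some absolute constant c > 0, by restricting to the box [0, cN^{-σ/3}]×[0, cN^{-2σ/3}]×[0, N^{-σ}] on which each term in the sum has real part ≥ 1/2. -/

import Mathlib

open MeasureTheory

set_option maxHeartbeats 2000000 in
/-- Lower-dimensional sharpness example: for `5/2 ≤ σ ≤ 3`, `N ≥ 2`,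
coefficients `a_k = 1` for `1 ≤ k ≤ N^{σ/3}` and `0` otherwise, and `p ≥ 1`,
`∫_{[0,1]²×[0,N^{-σ}]} |∑_{k=1}^N a_k e(x·(k,k²,k³))|^p dx ≥ c^p N^{-2σ} N^{pσ/3}`
for some absolute constant `c > 0`. -/
theorem stmt_16 :
    ∃ c : ℝ, 0 < c ∧
      ∀ (N : ℕ) (σ p : ℝ), 2 ≤ N → 5 / 2 ≤ σ → σ ≤ 3 → 1 ≤ p →
        c ^ p * (N : ℝ) ^ (-2 * σ) * (N : ℝ) ^ (p * σ / 3) ≤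
          ∫ x in (Set.Icc (0:ℝ) 1 ×ˢ (Set.Icc (0:ℝ) 1 ×ˢ Set.Icc (0:ℝ) ((N : ℝ) ^ (-σ)))),
            ‖∑ k ∈ Finset.Icc 1 N,
              (if (k : ℝ) ≤ (N : ℝ) ^ (σ / 3) then (1 : ℂ) else 0) *
                Complex.exp (2 * Real.pi * Complex.I *
                  ((x.1 * (k : ℝ) + x.2.1 * (k : ℝ) ^ 2 + x.2.2 * (k : ℝ) ^ 3 : ℝ) : ℂ))‖ ^ p := by
  refine ⟨1/55296, by norm_num, ?_⟩
  intro N σ p hN hσl hσu hp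
  have hN1 : (1:ℝ) ≤ (N:ℝ) := by exact_mod_cast Nat.one_le_of_lt hN
  have hN0 : (0:ℝ) < (N:ℝ) := by linarith
  have hσ0 : (0:ℝ) ≤ σ := by linarith
  have hp0 : (0:ℝ) ≤ p := by linarith
  set Nr : ℝ := (N:ℝ) with hNr
  set X : ℝ := Nr ^ (σ/3) with hXdef
  have hX1 : (1:ℝ) ≤ X := Real.one_le_rpow hN1 (by linarith)
  have hX0 : (0:ℝ) < X := by linarith
  set ε : ℝ := 1/24 with hε
  set F : ℝ × ℝ × ℝ → ℝ := fun x => ‖∑ k ∈ Finset.Icc 1 N,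
      (if (k : ℝ) ≤ X then (1 : ℂ) else 0) *
        Complex.exp (2 * Real.pi * Complex.I *
          ((x.1 * (k : ℝ) + x.2.1 * (k : ℝ) ^ 2 + x.2.2 * (k : ℝ) ^ 3 : ℝ) : ℂ))‖ ^ p with hF
  set D : Set (ℝ × ℝ × ℝ) :=
    Set.Icc (0:ℝ) 1 ×ˢ (Set.Icc (0:ℝ) 1 ×ˢ Set.Icc (0:ℝ) (Nr ^ (-σ))) with hD
  set B : Set (ℝ × ℝ × ℝ) :=
    Set.Icc (0:ℝ) (ε * Nr ^ (-(σ/3))) ×ˢ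
      (Set.Icc (0:ℝ) (ε * Nr ^ (-(2*σ/3))) ×ˢ Set.Icc (0:ℝ) (ε * Nr ^ (-σ))) with hB
  -- basic rpow facts
  have key1 : Nr ^ (-(σ/3)) * X = 1 := by
    rw [hXdef, ← Real.rpow_add hN0]
    norm_num
  have hX2 : X^2 = Nr ^ (2*σ/3) := by
    rw [hXdef, ← Real.rpow_natCast (Nr ^ (σ/3)) 2, ← Real.rpow_mul hN0.le]
    norm_num
    congr 1
    ring
  have hX3 : X^3 = Nr ^ σ := by
    rw [hXdef, ← Real.rpow_natCast (Nr ^ (σ/3)) 3, ← Real.rpow_mul hN0.le]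
    norm_num
  have key2 : Nr ^ (-(2*σ/3)) * X^2 = 1 := by
    rw [hX2, ← Real.rpow_add hN0, show -(2*σ/3) + 2*σ/3 = 0 by ring, Real.rpow_zero]
  have key3 : Nr ^ (-σ) * X^3 = 1 := by
    rw [hX3, ← Real.rpow_add hN0, show -σ + σ = 0 by ring, Real.rpow_zero]
  have hr1 : (0:ℝ) < Nr ^ (-(σ/3)) := Real.rpow_pos_of_pos hN0 _
  have hr2 : (0:ℝ) < Nr ^ (-(2*σ/3)) := Real.rpow_pos_of_pos hN0 _
  have hr3 : (0:ℝ) < Nr ^ (-σ) := Real.rpow_pos_of_pos hN0 _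
  have hle1 : Nr ^ (-(σ/3)) ≤ 1 :=
    Real.rpow_le_one_of_one_le_of_nonpos hN1 (by linarith)
  have hle2 : Nr ^ (-(2*σ/3)) ≤ 1 :=
    Real.rpow_le_one_of_one_le_of_nonpos hN1 (by linarith)
  -- B ⊆ D
  have hBsub : B ⊆ D := by
    refine Set.prod_mono (Set.Icc_subset_Icc le_rfl (by nlinarith)) ?_
    refine Set.prod_mono (Set.Icc_subset_Icc le_rfl (by nlinarith)) ?_
    refine Set.Icc_subset_Icc le_rfl ?_
    calc ε * Nr ^ (-σ) ≤ 1 * Nr ^ (-σ) :=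
      mul_le_mul_of_nonneg_right (by rw [hε]; norm_num) hr3.le
    _ = Nr ^ (-σ) := one_mul _
  -- continuity and integrability
  have hFc : Continuous F := by
    apply Continuous.rpow_const
    · fun_prop
    · intro x; right; linarith
  have hDcomp : IsCompact D := isCompact_Icc.prod (isCompact_Icc.prod isCompact_Icc)
  have hBcomp : IsCompact B := isCompact_Icc.prod (isCompact_Icc.prod isCompact_Icc)
  have hInt : IntegrableOn F D := hFc.continuousOn.integrableOn_compact hDcomp
  have hF0 : ∀ x, 0 ≤ F x := fun x => Real.rpow_nonneg (norm_nonneg _) p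
  -- counting
  set M : ℕ := ⌊X⌋₊ with hM
  have hM1 : 1 ≤ M := Nat.floor_pos.mpr hX1
  have hMN : M ≤ N := by
    have hXN : X ≤ Nr := by
      rw [hXdef]
      calc Nr ^ (σ/3) ≤ Nr ^ (1:ℝ) :=
        Real.rpow_le_rpow_of_exponent_le hN1 (by linarith)
      _ = Nr := Real.rpow_one Nr
    have := Nat.floor_le_floor hXN
    simpa [hNr] using this
  have hMhalf : X/2 ≤ (M:ℝ) := by
    rcases le_or_gt 2 X with h | h
    · have := Nat.sub_one_lt_floor X
      rw [← hM] at this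
      linarith
    · have : (1:ℝ) ≤ (M:ℝ) := by exact_mod_cast hM1
      linarith
  -- pointwise lower bound on B
  have hlow : ∀ x ∈ B, (X/4) ^ p ≤ F x := by
    rintro ⟨x₁, x₂, x₃⟩ hx
    simp only [hB, Set.mem_prod, Set.mem_Icc] at hx
    obtain ⟨⟨hx10, hx1t⟩, ⟨hx20, hx2t⟩, hx30, hx3t⟩ := hx
    -- real part of each term
    have hterm : ∀ k : ℕ, (k:ℝ) ≤ X →
        1/2 ≤ ((if (k : ℝ) ≤ X then (1 : ℂ) else 0) *
          Complex.exp (2 * Real.pi * Complex.I *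
            ((x₁ * (k : ℝ) + x₂ * (k : ℝ) ^ 2 + x₃ * (k : ℝ) ^ 3 : ℝ) : ℂ))).re := by
      intro k hkX
      have hk0 : (0:ℝ) ≤ (k:ℝ) := Nat.cast_nonneg k
      set t : ℝ := x₁ * (k : ℝ) + x₂ * (k : ℝ) ^ 2 + x₃ * (k : ℝ) ^ 3 with ht
      have hk2 : (k:ℝ)^2 ≤ X^2 := pow_le_pow_left₀ hk0 hkX 2
      have hk3 : (k:ℝ)^3 ≤ X^3 := pow_le_pow_left₀ hk0 hkX 3
      have hb1 : x₁ * (k:ℝ) ≤ ε := by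
        calc x₁ * (k:ℝ) ≤ (ε * Nr ^ (-(σ/3))) * X :=
          mul_le_mul hx1t hkX hk0 (by positivity)
        _ = ε * (Nr ^ (-(σ/3)) * X) := by ring
        _ = ε := by rw [key1, mul_one]
      have hb2 : x₂ * (k:ℝ)^2 ≤ ε := by
        calc x₂ * (k:ℝ)^2 ≤ (ε * Nr ^ (-(2*σ/3))) * X^2 :=
          mul_le_mul hx2t hk2 (by positivity) (by positivity)
        _ = ε * (Nr ^ (-(2*σ/3)) * X^2) := by ring
        _ = ε := by rw [key2, mul_one]
      have hb3 : x₃ * (k:ℝ)^3 ≤ ε := by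
        calc x₃ * (k:ℝ)^3 ≤ (ε * Nr ^ (-σ)) * X^3 :=
          mul_le_mul hx3t hk3 (by positivity) (by positivity)
        _ = ε * (Nr ^ (-σ) * X^3) := by ring
        _ = ε := by rw [key3, mul_one]
      have ht0 : 0 ≤ t := by positivity
      have htu : t ≤ 1/8 := by rw [ht]; rw [hε] at hb1 hb2 hb3; linarith
      clear_value t
      rw [if_pos hkX, one_mul,
        show (2 * (Real.pi:ℂ) * Complex.I * ((t : ℝ) : ℂ)) = (((2 * Real.pi * t : ℝ) : ℂ) * Complex.I) by
          push_cast; ring,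
        Complex.exp_ofReal_mul_I_re]
      have hπ : Real.pi ≤ 4 := Real.pi_le_four
      have hπ0 : 0 < Real.pi := Real.pi_pos
      have hy1 : 2 * Real.pi * t ≤ 1 := by nlinarith
      have hy0 : 0 ≤ 2 * Real.pi * t := by positivity
      have hy2 : (2 * Real.pi * t) ^ 2 ≤ 1 := by nlinarith
      have := Real.one_sub_sq_div_two_le_cos (x := 2 * Real.pi * t)
      linarith
    have hterm0 : ∀ k : ℕ,
        0 ≤ ((if (k : ℝ) ≤ X then (1 : ℂ) else 0) *
          Complex.exp (2 * Real.pi * Complex.I *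
            ((x₁ * (k : ℝ) + x₂ * (k : ℝ) ^ 2 + x₃ * (k : ℝ) ^ 3 : ℝ) : ℂ))).re := by
      intro k
      by_cases hk : (k:ℝ) ≤ X
      · linarith [hterm k hk]
      · rw [if_neg hk, zero_mul, Complex.zero_re]
    set S : ℂ := ∑ k ∈ Finset.Icc 1 N,
      (if (k : ℝ) ≤ X then (1 : ℂ) else 0) *
        Complex.exp (2 * Real.pi * Complex.I *
          ((x₁ * (k : ℝ) + x₂ * (k : ℝ) ^ 2 + x₃ * (k : ℝ) ^ 3 : ℝ) : ℂ)) with hS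
    have hre : X/4 ≤ S.re := by
      rw [hS, Complex.re_sum]
      have step1 : ∑ k ∈ Finset.Icc 1 M, ((if (k : ℝ) ≤ X then (1 : ℂ) else 0) *
            Complex.exp (2 * Real.pi * Complex.I *
              ((x₁ * (k : ℝ) + x₂ * (k : ℝ) ^ 2 + x₃ * (k : ℝ) ^ 3 : ℝ) : ℂ))).re ≤
          ∑ k ∈ Finset.Icc 1 N, ((if (k : ℝ) ≤ X then (1 : ℂ) else 0) *
            Complex.exp (2 * Real.pi * Complex.I *
              ((x₁ * (k : ℝ) + x₂ * (k : ℝ) ^ 2 + x₃ * (k : ℝ) ^ 3 : ℝ) : ℂ))).re :=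
        Finset.sum_le_sum_of_subset_of_nonneg
          (Finset.Icc_subset_Icc le_rfl hMN) (fun k _ _ => hterm0 k)
      have step2 : (M:ℝ) * (1/2) ≤ ∑ k ∈ Finset.Icc 1 M,
          ((if (k : ℝ) ≤ X then (1 : ℂ) else 0) *
            Complex.exp (2 * Real.pi * Complex.I *
              ((x₁ * (k : ℝ) + x₂ * (k : ℝ) ^ 2 + x₃ * (k : ℝ) ^ 3 : ℝ) : ℂ))).re := by
        have : ∑ k ∈ Finset.Icc 1 M, (1/2 : ℝ) = (M:ℝ) * (1/2) := by
          rw [Finset.sum_const, Nat.card_Icc]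
          simp
        rw [← this]
        refine Finset.sum_le_sum fun k hk => ?_
        have hkM : k ≤ M := (Finset.mem_Icc.mp hk).2
        have hkX : (k:ℝ) ≤ X :=
          le_trans (by exact_mod_cast hkM) (Nat.floor_le hX0.le)
        exact hterm k hkX
      linarith
    have hnorm : X/4 ≤ ‖S‖ := le_trans hre (by
      exact Complex.re_le_norm S)
    exact Real.rpow_le_rpow (by positivity) hnorm hp0
  -- integral estimates
  have hBmeas : MeasurableSet B :=
    measurableSet_Icc.prod (measurableSet_Icc.prod measurableSet_Icc)
  have hIB : IntegrableOn F B := hInt.mono_set hBsub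
  have hconst : IntegrableOn (fun _ : ℝ × ℝ × ℝ => (X/4) ^ p) B := by
    apply (integrableOn_const_iff (C := (X/4) ^ p)).mpr
    exact Or.inr hBcomp.measure_lt_top
  have h1 : ∫ _ in B, (X/4) ^ p ≤ ∫ x in B, F x :=
    setIntegral_mono_on hconst hIB hBmeas hlow
  have h2 : ∫ x in B, F x ≤ ∫ x in D, F x :=
    setIntegral_mono_set hInt (Filter.Eventually.of_forall hF0)
      (HasSubset.Subset.eventuallyLE hBsub)
  have hvol : (volume B).toReal =
      ε * Nr ^ (-(σ/3)) * (ε * Nr ^ (-(2*σ/3)) * (ε * Nr ^ (-σ))) := by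
    rw [hB]
    rw [show (volume : Measure (ℝ × ℝ × ℝ)) = (volume : Measure ℝ).prod volume from rfl]
    rw [Measure.prod_prod]
    rw [show (volume : Measure (ℝ × ℝ)) = (volume : Measure ℝ).prod volume from rfl]
    rw [Measure.prod_prod, Real.volume_Icc, Real.volume_Icc, Real.volume_Icc]
    rw [ENNReal.toReal_mul, ENNReal.toReal_mul]
    rw [ENNReal.toReal_ofReal (by rw [sub_zero]; positivity),
      ENNReal.toReal_ofReal (by rw [sub_zero]; positivity),
      ENNReal.toReal_ofReal (by rw [sub_zero]; positivity)]
    ring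
  have hIconst : ∫ _ in B, (X/4) ^ p =
      (ε * Nr ^ (-(σ/3)) * (ε * Nr ^ (-(2*σ/3)) * (ε * Nr ^ (-σ)))) * (X/4) ^ p := by
    rw [setIntegral_const, measureReal_def, hvol, smul_eq_mul]
  -- final arithmetic
  have harith : (1/55296:ℝ) ^ p * Nr ^ (-2 * σ) * Nr ^ (p * σ / 3) ≤
      (ε * Nr ^ (-(σ/3)) * (ε * Nr ^ (-(2*σ/3)) * (ε * Nr ^ (-σ)))) * (X/4) ^ p := by
    have hXp : X ^ p = Nr ^ (p * σ / 3) := by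
      rw [hXdef, ← Real.rpow_mul hN0.le]
      congr 1; ring
    have hdiv : (X/4) ^ p = X ^ p / 4 ^ p := Real.div_rpow hX0.le (by norm_num : (0:ℝ) ≤ 4) p
    have hNprod : Nr ^ (-(σ/3)) * (Nr ^ (-(2*σ/3)) * Nr ^ (-σ)) = Nr ^ (-2*σ) := by
      rw [← Real.rpow_add hN0, ← Real.rpow_add hN0]
      congr 1; ring
    have hc : (1/55296:ℝ) ^ p * 4 ^ p ≤ ε ^ 3 := by
      rw [← Real.mul_rpow (by norm_num) (by norm_num)]
      have : ((1:ℝ)/55296) * 4 = 1/13824 := by norm_num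
      rw [this]
      calc ((1:ℝ)/13824) ^ p ≤ ((1:ℝ)/13824) ^ (1:ℝ) :=
        Real.rpow_le_rpow_of_exponent_ge (by norm_num) (by norm_num) hp
      _ = 1/13824 := Real.rpow_one _
      _ = ε ^ 3 := by rw [hε]; norm_num
    have h4p : (0:ℝ) < 4 ^ p := Real.rpow_pos_of_pos (by norm_num) p
    have hXpp : (0:ℝ) < Nr ^ (p * σ / 3) := Real.rpow_pos_of_pos hN0 _
    have hN2σ : (0:ℝ) < Nr ^ (-2*σ) := Real.rpow_pos_of_pos hN0 _
    calc (1/55296:ℝ) ^ p * Nr ^ (-2 * σ) * Nr ^ (p * σ / 3)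
        ≤ (ε ^ 3 / 4 ^ p) * (Nr ^ (-2 * σ) * Nr ^ (p * σ / 3)) := by
          have h1' : (1/55296:ℝ) ^ p ≤ ε ^ 3 / 4 ^ p := by
            rw [le_div_iff₀ h4p]; exact hc
          calc (1/55296:ℝ) ^ p * Nr ^ (-2 * σ) * Nr ^ (p * σ / 3)
              = (1/55296:ℝ) ^ p * (Nr ^ (-2 * σ) * Nr ^ (p * σ / 3)) := by ring
            _ ≤ (ε ^ 3 / 4 ^ p) * (Nr ^ (-2 * σ) * Nr ^ (p * σ / 3)) :=
              mul_le_mul_of_nonneg_right h1' (le_of_lt (mul_pos hN2σ hXpp))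
      _ = (ε * Nr ^ (-(σ/3)) * (ε * Nr ^ (-(2*σ/3)) * (ε * Nr ^ (-σ)))) * (X/4) ^ p := by
          rw [hdiv, hXp, ← hNprod]; ring
  calc (1/55296:ℝ) ^ p * Nr ^ (-2 * σ) * Nr ^ (p * σ / 3)
      ≤ (ε * Nr ^ (-(σ/3)) * (ε * Nr ^ (-(2*σ/3)) * (ε * Nr ^ (-σ)))) * (X/4) ^ p := harith
    _ = ∫ _ in B, (X/4) ^ p := hIconst.symm
    _ ≤ ∫ x in B, F x := h1
    _ ≤ ∫ x in D, F x := h2
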